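/- Under the same assumptions as the multilevel complexity theorem but with β = 1 (i.e. Var[Ŷ_ℓ] ≤ c₂ N_ℓ^{−1} h_ℓ), there exists c₄ such that for every ε < e^{−1} one can choose L and N_ℓ so that the multilevel estimator achieves mean square error less than ε² with total cost at most c₄ ε^{−2} (log ε)². -/

import Mathlib

open MeasureTheory ProbabilityTheory

lemma mse_decomp {Ω : Type*} [MeasurableSpace Ω] (μ : Measure Ω) [IsProbabilityMeasure μ]
    (X : Ω → ℝ) (hX : MemLp X 2 μ) (m : ℝ) :
    ∫ ω, (X ω - m) ^ 2 ∂μ = variance X μ + ((∫ ω, X ω ∂μ) - m) ^ 2 := by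
  have hX1 : Integrable X μ := hX.integrable one_le_two
  have hX2 : Integrable (fun ω => X ω ^ 2) μ := hX.integrable_sq
  have expand : ∀ ω, (X ω - m) ^ 2 = X ω ^ 2 - (2 * m) * X ω + m ^ 2 := by intro ω; ring
  simp_rw [expand]
  have i1 : Integrable (fun ω => X ω ^ 2 - 2 * m * X ω) μ := hX2.sub (hX1.const_mul _)
  have i2 : Integrable (fun ω => 2 * m * X ω) μ := hX1.const_mul _
  rw [integral_add i1 (integrable_const _), integral_sub hX2 i2,
    MeasureTheory.integral_const_mul, integral_const,
    variance_eq_sub hX, probReal_univ, smul_eq_mul, one_mul]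
  simp only [Pi.pow_apply]
  ring

set_option maxHeartbeats 2000000 in
/-- Multilevel Monte Carlo complexity theorem, case `β = 1`:
with bias `|E[P̂_ℓ − P]| ≤ c₁ h_ℓ^α` (`α ≥ 1/2`), independent unbiased level estimators
`Ŷ_ℓ` based on `N_ℓ` samples with `Var[Ŷ_ℓ] ≤ c₂ N_ℓ⁻¹ h_ℓ^β` (`β = 1`), and level cost
`c₃ N_ℓ h_ℓ⁻¹`, there is `c₄` such that for every `ε < e⁻¹` one can choose `L` and `N_ℓ`
so that the combined estimator has mean square error below `ε²` at total cost `≤ c₄ ε⁻² (log ε)²`. -/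
theorem mlmc_complexity_beta_eq_one
    {Ω : Type*} [MeasurableSpace Ω] (μ : Measure Ω) [IsProbabilityMeasure μ]
    (T : ℝ) (hT : 0 < T)
    (P : Ω → ℝ) (hPint : Integrable P μ)
    (Phat : ℕ → Ω → ℝ) (hPhatint : ∀ ℓ, Integrable (Phat ℓ) μ)
    (Y : ℕ → ℕ → Ω → ℝ)   -- `Y ℓ N` : the estimator `Ŷ_ℓ` built from `N` samples
    (h : ℕ → ℝ) (hh : ∀ ℓ, h ℓ = T / 2 ^ ℓ)
    (c₁ c₂ c₃ α β : ℝ) (hc₁ : 0 < c₁) (hc₂ : 0 < c₂) (hc₃ : 0 < c₃)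
    (hα : (1:ℝ)/2 ≤ α) (hβ : β = 1)
    (hYint : ∀ ℓ N, MemLp (Y ℓ N) 2 μ)
    (hindep : ∀ N : ℕ → ℕ, iIndepFun (fun ℓ => Y ℓ (N ℓ)) μ)
    (hbias : ∀ ℓ, |(∫ ω, Phat ℓ ω ∂μ) - ∫ ω, P ω ∂μ| ≤ c₁ * h ℓ ^ α)
    (hmean0 : ∀ N, ∫ ω, Y 0 N ω ∂μ = ∫ ω, Phat 0 ω ∂μ)
    (hmean : ∀ ℓ N, 1 ≤ ℓ → ∫ ω, Y ℓ N ω ∂μ = ∫ ω, (Phat ℓ ω - Phat (ℓ - 1) ω) ∂μ)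
    (hvar : ∀ ℓ N, 0 < N → variance (Y ℓ N) μ ≤ c₂ * (N : ℝ)⁻¹ * h ℓ ^ β) :
    ∃ c₄ : ℝ, 0 < c₄ ∧ ∀ ε : ℝ, 0 < ε → ε < Real.exp (-1) →
      ∃ (L : ℕ) (N : ℕ → ℕ), (∀ ℓ ≤ L, 0 < N ℓ) ∧
        (∫ ω, ((∑ ℓ ∈ Finset.range (L + 1), Y ℓ (N ℓ) ω) - ∫ ω', P ω' ∂μ) ^ 2 ∂μ < ε ^ 2) ∧
        ∑ ℓ ∈ Finset.range (L + 1), c₃ * (N ℓ : ℝ) * (h ℓ)⁻¹ ≤ c₄ * ε ^ (-2 : ℝ) * Real.log ε ^ 2 := by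
  subst hβ
  have hs2 : (0:ℝ) < Real.sqrt 2 := by positivity
  set K₁ : ℝ := |Real.log (Real.sqrt 2 * c₁)| + 1 with hK₁def
  set K₂ : ℝ := (|Real.log T| + 2 * K₁) / Real.log 2 with hK₂def
  set K₃ : ℝ := K₂ + 2 with hK₃def
  set K₄ : ℝ := 4 * (1 + T * (1 + Real.sqrt 2 * c₁) ^ 2) with hK₄def
  have hK₁pos : 0 < K₁ := by positivity
  have hlog2 : (0:ℝ) < Real.log 2 := Real.log_pos (by norm_num)
  have hK₂nonneg : 0 ≤ K₂ := by
    apply div_nonneg _ hlog2.le; positivity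
  have hK₃pos : 0 < K₃ := by rw [hK₃def]; linarith
  have hK₄pos : 0 < K₄ := by
    have : 0 < T * (1 + Real.sqrt 2 * c₁) ^ 2 := by positivity
    rw [hK₄def]; nlinarith
  refine ⟨4*c₂*c₃*K₃^2 + 2*c₃*K₄/T, by positivity, ?_⟩
  intro ε hε hεe
  have hε1 : ε < 1 := lt_trans hεe (by
    rw [Real.exp_lt_one_iff]; norm_num)
  set E : ℝ := -Real.log ε with hEdef
  have hE1 : 1 ≤ E := by
    have h1 : Real.log ε < Real.log (Real.exp (-1)) := Real.log_lt_log hε hεe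
    rw [Real.log_exp] at h1
    rw [hEdef]; linarith
  have hEpos : 0 < E := lt_of_lt_of_le one_pos hE1
  -- choice of L
  set A : ℝ := Real.sqrt 2 * c₁ / ε with hAdef
  have hA0 : 0 < A := by positivity
  set M : ℝ := max 1 A with hMdef
  have hM1 : (1:ℝ) ≤ M := le_max_left _ _
  have hMA : A ≤ M := le_max_right _ _
  have hM0 : (0:ℝ) < M := lt_of_lt_of_le one_pos hM1
  set M2 : ℝ := M ^ (2:ℝ) with hM2def
  have hM2pos : 0 < M2 := Real.rpow_pos_of_pos hM0 2
  set x : ℝ := Real.logb 2 (T * M2) with hxdef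
  set L : ℕ := ⌈x⌉₊ with hLdef
  have h2x : (2:ℝ) ^ x = T * M2 := Real.rpow_logb two_pos (by norm_num) (by positivity)
  have h2L : T * M2 ≤ (2:ℝ) ^ L := by
    calc T * M2 = (2:ℝ) ^ x := h2x.symm
    _ ≤ (2:ℝ) ^ ((L:ℝ)) := Real.rpow_le_rpow_of_exponent_le one_le_two (Nat.le_ceil x)
    _ = (2:ℝ) ^ L := Real.rpow_natCast 2 L
  have h2Lpos : (0:ℝ) < 2 ^ L := by positivity
  have hhL : h L = T / 2 ^ L := hh L
  have hhLpos : 0 < h L := by rw [hhL]; positivity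
  -- bias bound
  have hbiasL : c₁ * h L ^ α ≤ ε / Real.sqrt 2 := by
    have hb1 : h L ≤ M2⁻¹ := by
      rw [hhL, div_le_iff₀ h2Lpos, inv_mul_eq_div, le_div_iff₀ hM2pos]
      linarith
    have hb2 : h L ^ α ≤ (M2⁻¹) ^ α :=
      Real.rpow_le_rpow hhLpos.le hb1 (by linarith)
    have hb3 : (M2⁻¹) ^ α = M ^ (-(2*α)) := by
      rw [hM2def, ← Real.rpow_neg hM0.le, ← Real.rpow_mul hM0.le]
      norm_num
    have hb4 : M ^ (-(2*α)) ≤ M ^ (-1:ℝ) :=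
      Real.rpow_le_rpow_of_exponent_le hM1 (by linarith)
    have hb5 : M ^ (-1:ℝ) = M⁻¹ := Real.rpow_neg_one M
    have hb6 : M⁻¹ ≤ A⁻¹ := inv_anti₀ hA0 hMA
    have hb7 : A⁻¹ = ε / (Real.sqrt 2 * c₁) := by
      rw [hAdef]; field_simp
    have : h L ^ α ≤ ε / (Real.sqrt 2 * c₁) := by
      calc h L ^ α ≤ (M2⁻¹) ^ α := hb2
      _ = M ^ (-(2*α)) := hb3
      _ ≤ M ^ (-1:ℝ) := hb4
      _ = M⁻¹ := hb5
      _ ≤ A⁻¹ := hb6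
      _ = ε / (Real.sqrt 2 * c₁) := hb7
    calc c₁ * h L ^ α ≤ c₁ * (ε / (Real.sqrt 2 * c₁)) := by
          exact mul_le_mul_of_nonneg_left this hc₁.le
    _ = ε / Real.sqrt 2 := by field_simp
  -- choice of N
  set N : ℕ → ℕ := fun ℓ => ⌈4*(L+1)*c₂*(h ℓ)/ε^2⌉₊ + 1 with hNdef
  have hNpos : ∀ ℓ, 0 < N ℓ := fun ℓ => Nat.succ_pos _
  have hhpos : ∀ ℓ, 0 < h ℓ := by intro ℓ; rw [hh ℓ]; positivity
  have haux : ∀ ℓ, 0 < 4*((L:ℝ)+1)*c₂*(h ℓ)/ε^2 := by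
    intro ℓ; have := hhpos ℓ; positivity
  have hNge : ∀ ℓ, 4*((L:ℝ)+1)*c₂*(h ℓ)/ε^2 ≤ (N ℓ : ℝ) := by
    intro ℓ
    calc 4*((L:ℝ)+1)*c₂*(h ℓ)/ε^2 ≤ (⌈4*((L:ℝ)+1)*c₂*(h ℓ)/ε^2⌉₊ : ℝ) := Nat.le_ceil _
    _ ≤ (N ℓ : ℝ) := by rw [hNdef]; push_cast; simp
  -- per-level variance bound
  have hvarlev : ∀ ℓ, variance (Y ℓ (N ℓ)) μ ≤ ε^2 / (4*((L:ℝ)+1)) := by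
    intro ℓ
    have h1 := hvar ℓ (N ℓ) (hNpos ℓ)
    rw [Real.rpow_one] at h1
    have hNposR : (0:ℝ) < (N ℓ : ℝ) := by exact_mod_cast hNpos ℓ
    have h2 : ((N ℓ : ℝ))⁻¹ ≤ (4*((L:ℝ)+1)*c₂*(h ℓ)/ε^2)⁻¹ :=
      inv_anti₀ (haux ℓ) (hNge ℓ)
    have h3 : c₂ * ((N ℓ : ℝ))⁻¹ * h ℓ ≤ c₂ * (4*((L:ℝ)+1)*c₂*(h ℓ)/ε^2)⁻¹ * h ℓ := by
      have := hhpos ℓ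
      apply mul_le_mul_of_nonneg_right _ (hhpos ℓ).le
      exact mul_le_mul_of_nonneg_left h2 hc₂.le
    have h4 : c₂ * (4*((L:ℝ)+1)*c₂*(h ℓ)/ε^2)⁻¹ * h ℓ = ε^2 / (4*((L:ℝ)+1)) := by
      have hL1 : (0:ℝ) < (L:ℝ) + 1 := by positivity
      have := hhpos ℓ
      field_simp
    linarith
  -- the sum as a function
  set S : Ω → ℝ := fun ω => ∑ ℓ ∈ Finset.range (L + 1), Y ℓ (N ℓ) ω with hSdef
  have hSmem : MemLp S 2 μ := memLp_finsetSum _ (fun i _ => hYint i (N i))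
  have hSfun : S = ∑ ℓ ∈ Finset.range (L + 1), Y ℓ (N ℓ) := by
    ext ω; simp [hSdef]
  -- variance of the sum
  have hvarS : variance S μ ≤ ε^2/4 := by
    rw [hSfun, IndepFun.variance_sum (fun i _ => hYint i (N i))
      (fun i _ j _ hij => (hindep N).indepFun hij)]
    calc ∑ ℓ ∈ Finset.range (L+1), variance (Y ℓ (N ℓ)) μ
        ≤ ∑ ℓ ∈ Finset.range (L+1), ε^2 / (4*((L:ℝ)+1)) :=
          Finset.sum_le_sum (fun i _ => hvarlev i)
    _ = ((L:ℝ)+1) * (ε^2 / (4*((L:ℝ)+1))) := by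
          rw [Finset.sum_const, Finset.card_range]; push_cast; ring
    _ = ε^2/4 := by
          have hL1 : ((L:ℝ)+1) ≠ 0 := by positivity
          field_simp
  -- mean of the sum
  have hYintab : ∀ ℓ n, Integrable (Y ℓ n) μ := fun ℓ n => (hYint ℓ n).integrable one_le_two
  have tele : ∀ K : ℕ, ∑ ℓ ∈ Finset.range (K+1), ∫ ω, Y ℓ (N ℓ) ω ∂μ = ∫ ω, Phat K ω ∂μ := by
    intro K
    induction K with
    | zero => simpa using hmean0 (N 0)
    | succ K ih =>
      rw [Finset.sum_range_succ, ih, hmean (K+1) (N (K+1)) (by omega),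
        integral_sub (hPhatint _) (hPhatint _)]
      simp
  have hSmean : ∫ ω, S ω ∂μ = ∫ ω, Phat L ω ∂μ := by
    rw [hSdef]
    rw [integral_finset_sum _ (fun i _ => hYintab i (N i))]
    exact tele L
  -- bias squared bound
  have hbias2 : ((∫ ω, S ω ∂μ) - ∫ ω', P ω' ∂μ)^2 ≤ ε^2/2 := by
    rw [hSmean]
    have h1 : |(∫ ω, Phat L ω ∂μ) - ∫ ω, P ω ∂μ| ≤ ε / Real.sqrt 2 :=
      le_trans (hbias L) hbiasL
    have h2 : ((∫ ω, Phat L ω ∂μ) - ∫ ω, P ω ∂μ)^2 ≤ (ε / Real.sqrt 2)^2 := by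
      rw [← sq_abs]
      exact pow_le_pow_left₀ (abs_nonneg _) h1 2
    have h3 : (ε / Real.sqrt 2)^2 = ε^2/2 := by
      rw [div_pow, Real.sq_sqrt (by norm_num : (0:ℝ) ≤ 2)]
    linarith
  -- MSE bound
  have hMSE : ∫ ω, ((∑ ℓ ∈ Finset.range (L + 1), Y ℓ (N ℓ) ω) - ∫ ω', P ω' ∂μ) ^ 2 ∂μ < ε ^ 2 := by
    have := mse_decomp μ S hSmem (∫ ω', P ω' ∂μ)
    have hεsq : 0 < ε^2 := by positivity
    calc ∫ ω, ((∑ ℓ ∈ Finset.range (L + 1), Y ℓ (N ℓ) ω) - ∫ ω', P ω' ∂μ) ^ 2 ∂μ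
        = ∫ ω, (S ω - ∫ ω', P ω' ∂μ) ^ 2 ∂μ := rfl
    _ = variance S μ + ((∫ ω, S ω ∂μ) - ∫ ω', P ω' ∂μ)^2 := this
    _ ≤ ε^2/4 + ε^2/2 := add_le_add hvarS hbias2
    _ < ε^2 := by linarith
  refine ⟨L, N, fun ℓ _ => hNpos ℓ, hMSE, ?_⟩
  -- ####### cost bound #######
  have hEeq : Real.log ε = -E := by rw [hEdef]; ring
  -- log M ≤ K₁ E
  have hlogM : Real.log M ≤ K₁ * E := by
    rcases le_or_gt A 1 with hA1 | hA1
    · rw [hMdef, max_eq_left hA1, Real.log_one]; positivity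
    · rw [hMdef, max_eq_right hA1.le, hAdef,
        Real.log_div (by positivity) (ne_of_gt hε)]
      have h1 : Real.log (Real.sqrt 2 * c₁) ≤ |Real.log (Real.sqrt 2 * c₁)| := le_abs_self _
      have h2 : |Real.log (Real.sqrt 2 * c₁)| ≤ |Real.log (Real.sqrt 2 * c₁)| * E :=
        le_mul_of_one_le_right (abs_nonneg _) hE1
      rw [hK₁def, hEeq]
      have expand : (|Real.log (Real.sqrt 2 * c₁)| + 1) * E
          = |Real.log (Real.sqrt 2 * c₁)| * E + E := by ring
      rw [expand]
      linarith
  have hlogMpos : 0 ≤ Real.log M := Real.log_nonneg hM1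
  -- x ≤ K₂ E
  have hxK : x ≤ K₂ * E := by
    have hlogTM : Real.log (T * M2) = Real.log T + 2 * Real.log M := by
      rw [Real.log_mul (ne_of_gt hT) (ne_of_gt hM2pos), hM2def, Real.log_rpow hM0]
    have hnum : Real.log T + 2 * Real.log M ≤ (|Real.log T| + 2 * K₁) * E := by
      have h1 : Real.log T ≤ |Real.log T| := le_abs_self _
      have h2 : |Real.log T| ≤ |Real.log T| * E :=
        le_mul_of_one_le_right (abs_nonneg _) hE1
      have expand : (|Real.log T| + 2 * K₁) * E = |Real.log T| * E + 2 * (K₁ * E) := by ring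
      rw [expand]
      linarith
    rw [hxdef, Real.logb, hlogTM, hK₂def, div_mul_eq_mul_div]
    exact (div_le_div_iff_of_pos_right hlog2).mpr hnum
  -- L ≤ max 0 x + 1
  have hLle : (L:ℝ) ≤ max 0 x + 1 := by
    have h1 : L ≤ ⌈max 0 x⌉₊ := Nat.ceil_mono (le_max_right 0 x)
    have h2 : (⌈max 0 x⌉₊ : ℝ) < max 0 x + 1 := Nat.ceil_lt_add_one (le_max_left 0 x)
    have h3 : (L:ℝ) ≤ (⌈max 0 x⌉₊ : ℝ) := by exact_mod_cast h1
    linarith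
  have hmx : max 0 x ≤ K₂ * E := max_le (by positivity) hxK
  have hL1E : (L:ℝ) + 1 ≤ K₃ * E := by
    have expand : (K₂ + 2) * E = K₂ * E + 2 * E := by ring
    rw [hK₃def, expand]
    linarith
  have hL1pos : (0:ℝ) < (L:ℝ) + 1 := by positivity
  -- 2^(L+1) ≤ K₄ / ε^2
  have hmono : Monotone fun t : ℝ => (2:ℝ) ^ t :=
    fun a b hab => Real.rpow_le_rpow_of_exponent_le one_le_two hab
  have h2max : (2:ℝ) ^ (max 0 x) = max 1 (T * M2) := by
    have := hmono.map_max (a := 0) (b := x)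
    simpa [Real.rpow_zero, h2x] using this
  have hMleps : M ≤ (1 + Real.sqrt 2 * c₁) / ε := by
    apply max_le
    · rw [le_div_iff₀ hε, one_mul]
      linarith [mul_pos hs2 hc₁]
    · rw [hAdef]; gcongr; linarith
  have hM2le : M2 ≤ (1 + Real.sqrt 2 * c₁) ^ 2 / ε ^ 2 := by
    have h1 : M2 ≤ ((1 + Real.sqrt 2 * c₁) / ε) ^ (2:ℝ) :=
      Real.rpow_le_rpow hM0.le hMleps (by norm_num)
    rw [Real.rpow_two, div_pow] at h1
    exact h1
  have hmax_le : max 1 (T * M2) ≤ (1 + T * (1 + Real.sqrt 2 * c₁) ^ 2) / ε ^ 2 := by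
    have hεsq : (0:ℝ) < ε^2 := by positivity
    apply max_le
    · rw [le_div_iff₀ hεsq, one_mul]
      have he2 : ε^2 < 1 := pow_lt_one₀ hε.le hε1 two_ne_zero
      linarith [mul_nonneg hT.le (sq_nonneg (1 + Real.sqrt 2 * c₁))]
    · calc T * M2 ≤ T * ((1 + Real.sqrt 2 * c₁) ^ 2 / ε ^ 2) :=
            mul_le_mul_of_nonneg_left hM2le hT.le
      _ = T * (1 + Real.sqrt 2 * c₁) ^ 2 / ε ^ 2 := by ring
      _ ≤ (1 + T * (1 + Real.sqrt 2 * c₁) ^ 2) / ε ^ 2 := by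
            gcongr; linarith
  have h2L1 : (2:ℝ) ^ (L+1) ≤ K₄ / ε ^ 2 := by
    have e1 : (2:ℝ) ^ L ≤ 2 * max 1 (T * M2) := by
      calc (2:ℝ) ^ L = (2:ℝ) ^ ((L:ℝ)) := (Real.rpow_natCast 2 L).symm
      _ ≤ (2:ℝ) ^ (max 0 x + 1) := Real.rpow_le_rpow_of_exponent_le one_le_two hLle
      _ = 2 * (2:ℝ) ^ (max 0 x) := by
          rw [Real.rpow_add two_pos, Real.rpow_one]; ring
      _ = 2 * max 1 (T * M2) := by rw [h2max]
    calc (2:ℝ) ^ (L+1) = 2 * (2:ℝ) ^ L := by ring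
    _ ≤ 4 * max 1 (T * M2) := by linarith
    _ ≤ 4 * ((1 + T * (1 + Real.sqrt 2 * c₁) ^ 2) / ε ^ 2) :=
        mul_le_mul_of_nonneg_left hmax_le (by norm_num)
    _ = K₄ / ε ^ 2 := by rw [hK₄def]; ring
  -- per-term cost bound
  have hterm : ∀ ℓ, c₃ * (N ℓ : ℝ) * (h ℓ)⁻¹ ≤
      4*c₂*c₃*((L:ℝ)+1)/ε^2 + 2*c₃*(h ℓ)⁻¹ := by
    intro ℓ
    have hhℓ := hhpos ℓ
    have hNle : (N ℓ:ℝ) ≤ 4*((L:ℝ)+1)*c₂*h ℓ/ε^2 + 2 := by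
      rw [hNdef]
      push_cast
      have := Nat.ceil_lt_add_one (le_of_lt (haux ℓ))
      linarith
    have key : (4*((L:ℝ)+1)*c₂*h ℓ/ε^2 + 2) * (h ℓ)⁻¹
        = 4*((L:ℝ)+1)*c₂/ε^2 + 2*(h ℓ)⁻¹ := by
      field_simp
    calc c₃ * (N ℓ : ℝ) * (h ℓ)⁻¹
        ≤ c₃ * ((4*((L:ℝ)+1)*c₂*h ℓ/ε^2 + 2) * (h ℓ)⁻¹) := by
          rw [mul_assoc]
          apply mul_le_mul_of_nonneg_left _ hc₃.le
          exact mul_le_mul_of_nonneg_right hNle (by positivity)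
    _ = c₃ * (4*((L:ℝ)+1)*c₂/ε^2 + 2*(h ℓ)⁻¹) := by rw [key]
    _ = 4*c₂*c₃*((L:ℝ)+1)/ε^2 + 2*c₃*(h ℓ)⁻¹ := by ring
  -- geometric sum
  have hsumh : ∑ ℓ ∈ Finset.range (L+1), (h ℓ)⁻¹ ≤ 2^(L+1)/T := by
    have hgeo : ∑ ℓ ∈ Finset.range (L+1), (2:ℝ)^ℓ = 2^(L+1) - 1 := by
      have := geom_sum_eq (by norm_num : (2:ℝ) ≠ 1) (L+1)
      rw [this]; norm_num
    have hrw : ∀ ℓ, (h ℓ)⁻¹ = (2:ℝ)^ℓ / T := by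
      intro ℓ; rw [hh ℓ, inv_div]
    simp_rw [hrw]
    rw [← Finset.sum_div, hgeo]
    exact (div_le_div_iff_of_pos_right hT).mpr (sub_le_self _ zero_le_one)
  -- assemble
  have hεsq : (0:ℝ) < ε^2 := by positivity
  have hrwe : ε^(-2:ℝ) = (ε^2)⁻¹ := by
    rw [Real.rpow_neg hε.le, Real.rpow_two]
  have hlogsq : Real.log ε ^ 2 = E^2 := by rw [hEeq]; ring
  have hE2 : 1 ≤ E^2 := by
    have hmm := mul_le_mul hE1 hE1 zero_le_one (le_of_lt hEpos)
    rw [pow_two]; linarith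
  calc ∑ ℓ ∈ Finset.range (L + 1), c₃ * (N ℓ : ℝ) * (h ℓ)⁻¹
      ≤ ∑ ℓ ∈ Finset.range (L + 1), (4*c₂*c₃*((L:ℝ)+1)/ε^2 + 2*c₃*(h ℓ)⁻¹) :=
        Finset.sum_le_sum (fun i _ => hterm i)
  _ = ((L:ℝ)+1) * (4*c₂*c₃*((L:ℝ)+1)/ε^2) + 2*c₃ * ∑ ℓ ∈ Finset.range (L+1), (h ℓ)⁻¹ := by
        rw [Finset.sum_add_distrib, Finset.sum_const, Finset.card_range, ← Finset.mul_sum]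
        push_cast; ring
  _ ≤ ((L:ℝ)+1) * (4*c₂*c₃*((L:ℝ)+1)/ε^2) + 2*c₃ * (2^(L+1)/T) := by
        gcongr
  _ = 4*c₂*c₃*((L:ℝ)+1)^2/ε^2 + 2*c₃/T * 2^(L+1) := by ring
  _ ≤ 4*c₂*c₃*(K₃*E)^2/ε^2 + 2*c₃/T * (K₄/ε^2) := by
        gcongr
  _ ≤ (4*c₂*c₃*K₃^2 + 2*c₃*K₄/T) * ε^(-2:ℝ) * Real.log ε ^ 2 := by
        rw [hrwe, hlogsq]
        have h1 : 4*c₂*c₃*(K₃*E)^2/ε^2 = 4*c₂*c₃*K₃^2 * (ε^2)⁻¹ * E^2 := by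
          field_simp
        have h2 : 2*c₃/T * (K₄/ε^2) ≤ 2*c₃*K₄/T * (ε^2)⁻¹ * E^2 := by
          have heq : 2*c₃/T * (K₄/ε^2) = 2*c₃*K₄/T * (ε^2)⁻¹ * 1 := by
            field_simp
          rw [heq]
          have hpos : (0:ℝ) ≤ 2*c₃*K₄/T * (ε^2)⁻¹ := by positivity
          exact mul_le_mul_of_nonneg_left hE2 hpos
        have expand : (4*c₂*c₃*K₃^2 + 2*c₃*K₄/T) * (ε^2)⁻¹ * E^2
            = 4*c₂*c₃*K₃^2 * (ε^2)⁻¹ * E^2 + 2*c₃*K₄/T * (ε^2)⁻¹ * E^2 := by ring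
        rw [h1, expand]
        linarith
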